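/- arXiv:2406.07950 — 7 statements merged into one kernel-verified Lean document; each statement's English description precedes it below -/
import Mathlib

section
/- Under the primal error setting with coercivity constant α_A, for each n ∈ {1, …, N} one has (eⁿ)ᵀ M eⁿ − (eⁿ⁻¹)ᵀ M eⁿ⁻¹ + Δt·(eⁿ)ᵀ A_sym eⁿ ≤ (Δt/α_A)·‖rⁿ‖₋₁². -/
open Matrix BigOperators Finset

/-- The energy norm `‖v‖_{G*} = √(vᵀ G* v)` induced by a matrix `G`. -/
noncomputable def normG {d : ℕ} (G : Matrix (Fin d) (Fin d) ℝ) (v : Fin d → ℝ) : ℝ :=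
  Real.sqrt (v ⬝ᵥ G.mulVec v)

/-- The dual norm `‖r‖₋₁ = sup_{v ≠ 0} (rᵀ v)/‖v‖_{G*}`. -/
noncomputable def dualNorm {d : ℕ} (G : Matrix (Fin d) (Fin d) ℝ) (r : Fin d → ℝ) : ℝ :=
  ⨆ v : {v : Fin d → ℝ // v ≠ 0}, (r ⬝ᵥ (v : Fin d → ℝ)) / normG G (v : Fin d → ℝ)

/-- The symmetric part `(A + Aᵀ)/2` of a matrix. -/
noncomputable def symPart {d : ℕ} (A : Matrix (Fin d) (Fin d) ℝ) : Matrix (Fin d) (Fin d) ℝ :=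
  ((1 : ℝ)/2) • (A + Aᵀ)

lemma cauchyG {d : ℕ} (G : Matrix (Fin d) (Fin d) ℝ) (hG : G.PosDef) (r : Fin d → ℝ) :
    ∃ C : ℝ, ∀ v, r ⬝ᵥ v ≤ C * normG G v := by
  open scoped MatrixOrder in
  set S := CFC.sqrt G with hSdef
  have hSS : S * S = G := CFC.sqrt_mul_sqrt_self G hG.posSemidef.nonneg
  have hSherm : S.IsHermitian := (CFC.sqrt_nonneg G).posSemidef.1
  have hsymm : Sᵀ = S := by simpa using hSherm.eq
  have hdet : IsUnit S.det := by
    have h1 : S.det * S.det = G.det := by rw [← det_mul, hSS]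
    have h2 := hG.det_pos
    exact isUnit_iff_ne_zero.2 (fun h => by rw [h, mul_zero] at h1; exact h2.ne' h1.symm)
  refine ⟨Real.sqrt ((S⁻¹ *ᵥ r) ⬝ᵥ (S⁻¹ *ᵥ r)), fun v => ?_⟩
  have key : r ⬝ᵥ v = (S⁻¹ *ᵥ r) ⬝ᵥ (S *ᵥ v) := by
    rw [dotProduct_mulVec, ← mulVec_transpose, hsymm, mulVec_mulVec,
      Matrix.mul_nonsing_inv _ hdet, one_mulVec]
  have hGv : (S *ᵥ v) ⬝ᵥ (S *ᵥ v) = v ⬝ᵥ G.mulVec v := by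
    rw [dotProduct_mulVec, ← mulVec_transpose, hsymm, mulVec_mulVec, hSS, dotProduct_comm]
  calc r ⬝ᵥ v = (S⁻¹ *ᵥ r) ⬝ᵥ (S *ᵥ v) := key
    _ ≤ Real.sqrt (∑ i, (S⁻¹ *ᵥ r) i ^ 2) * Real.sqrt (∑ i, (S *ᵥ v) i ^ 2) :=
        Real.sum_mul_le_sqrt_mul_sqrt _ _ _
    _ = Real.sqrt ((S⁻¹ *ᵥ r) ⬝ᵥ (S⁻¹ *ᵥ r)) * normG G v := by
        rw [normG, ← hGv]; simp [dotProduct, sq]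

lemma normG_pos {d : ℕ} {G : Matrix (Fin d) (Fin d) ℝ} (hG : G.PosDef)
    {v : Fin d → ℝ} (hv : v ≠ 0) : 0 < normG G v := by
  have := hG.dotProduct_mulVec_pos hv
  rw [normG]
  exact Real.sqrt_pos.2 (by simpa using this)

lemma le_dualNorm {d : ℕ} (hd : 1 ≤ d) {G : Matrix (Fin d) (Fin d) ℝ} (hG : G.PosDef)
    (r : Fin d → ℝ) {v : Fin d → ℝ} (hv : v ≠ 0) :
    r ⬝ᵥ v ≤ dualNorm G r * normG G v := by
  obtain ⟨C, hC⟩ := cauchyG G hG r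
  have hne : Nonempty {v : Fin d → ℝ // v ≠ 0} := by
    refine ⟨⟨fun _ => 1, fun h => ?_⟩⟩
    have := congrFun h ⟨0, hd⟩
    simp at this
  have hbdd : BddAbove (Set.range fun w : {v : Fin d → ℝ // v ≠ 0} =>
      (r ⬝ᵥ (w : Fin d → ℝ)) / normG G (w : Fin d → ℝ)) := by
    refine ⟨C, fun x hx => ?_⟩
    obtain ⟨⟨w, hw⟩, rfl⟩ := hx
    exact (div_le_iff₀ (normG_pos hG hw)).2 (hC w)
  have h := le_ciSup hbdd ⟨v, hv⟩
  have hng := normG_pos hG hv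
  rw [dualNorm]
  calc r ⬝ᵥ v = (r ⬝ᵥ v / normG G v) * normG G v := by field_simp
    _ ≤ _ := mul_le_mul_of_nonneg_right h hng.le

theorem stmt2 {d : ℕ} (hd : 1 ≤ d)
    (G M A : Matrix (Fin d) (Fin d) ℝ) (hG : G.PosDef) (hM : M.PosSemidef)
    (Δt : ℝ) (hΔt : 0 < Δt) (N : ℕ) (hN : 1 ≤ N)
    (αA : ℝ) (hαA : 0 < αA)
    (hcoA : ∀ v : Fin d → ℝ, αA * (normG G v)^2 ≤ v ⬝ᵥ (symPart A).mulVec v)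
    (e r : ℕ → Fin d → ℝ) (he0 : e 0 = 0)
    (hstep : ∀ k, 1 ≤ k → k ≤ N →
      (M + Δt • A).mulVec (e k) = M.mulVec (e (k - 1)) - Δt • r k)
    (n : ℕ) (hn1 : 1 ≤ n) (hnN : n ≤ N) :
    e n ⬝ᵥ M.mulVec (e n) - e (n - 1) ⬝ᵥ M.mulVec (e (n - 1)) +
        Δt * (e n ⬝ᵥ (symPart A).mulVec (e n)) ≤
      (Δt / αA) * (dualNorm G (r n))^2 := by
  set en := e n with hen
  set em := e (n-1) with hem
  set rn := r n with hrn
  have hMsymmT : Mᵀ = M := by simpa using hM.1.eq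
  have hY : 0 ≤ em ⬝ᵥ M.mulVec em := by simpa using hM.dotProduct_mulVec_nonneg em
  have hRHS : 0 ≤ (Δt / αA) * (dualNorm G rn)^2 := by positivity
  -- symmetric part identity
  have hAsymAvv : en ⬝ᵥ Aᵀ.mulVec en = en ⬝ᵥ A.mulVec en := by
    rw [mulVec_transpose, dotProduct_comm, ← dotProduct_mulVec]
  have hAsym : en ⬝ᵥ (symPart A).mulVec en = en ⬝ᵥ A.mulVec en := by
    rw [symPart, smul_mulVec, dotProduct_smul, add_mulVec, dotProduct_add, hAsymAvv, smul_eq_mul]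
    ring
  by_cases h0 : en = 0
  · rw [h0]
    simp only [dotProduct_zero, zero_dotProduct, Matrix.mulVec_zero]
    linarith
  -- main case
  have hs := hstep n hn1 hnN
  have hdot : en ⬝ᵥ M.mulVec en + Δt * (en ⬝ᵥ A.mulVec en)
      = en ⬝ᵥ M.mulVec em - Δt * (en ⬝ᵥ rn) := by
    have := congrArg (fun x => en ⬝ᵥ x) hs
    simpa [add_mulVec, smul_mulVec, dotProduct_add, dotProduct_smul,
      dotProduct_sub, smul_eq_mul, ← hen, ← hem, ← hrn] using this
  have hMsymm : em ⬝ᵥ M.mulVec en = en ⬝ᵥ M.mulVec em := by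
    rw [dotProduct_mulVec, ← mulVec_transpose, hMsymmT, dotProduct_comm]
  have hPSD : 0 ≤ (en - em) ⬝ᵥ M.mulVec (en - em) := by simpa using hM.dotProduct_mulVec_nonneg (en - em)
  have hPSD' : 0 ≤ en ⬝ᵥ M.mulVec en - 2 * (en ⬝ᵥ M.mulVec em) + em ⬝ᵥ M.mulVec em := by
    have : (en - em) ⬝ᵥ M.mulVec (en - em)
        = en ⬝ᵥ M.mulVec en - en ⬝ᵥ M.mulVec em - em ⬝ᵥ M.mulVec en + em ⬝ᵥ M.mulVec em := by
      rw [Matrix.mulVec_sub, sub_dotProduct, dotProduct_sub, dotProduct_sub]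
      ring
    rw [this, hMsymm] at hPSD
    linarith
  have hco := hcoA en
  rw [hAsym] at hco
  have hngneg : normG G (-en) = normG G en := by
    rw [normG, normG, Matrix.mulVec_neg, dotProduct_neg, neg_dotProduct, neg_neg]
  have hρ : -(en ⬝ᵥ rn) ≤ dualNorm G rn * normG G en := by
    have := le_dualNorm hd hG rn (neg_ne_zero.2 h0)
    rwa [dotProduct_neg, hngneg, dotProduct_comm] at this
  have hng : 0 < normG G en := normG_pos hG h0
  set ng := normG G en with hngdef
  set D := dualNorm G rn with hD
  -- combine: goal * αA
  rw [div_mul_eq_mul_div, le_div_iff₀ hαA, hAsym]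
  nlinarith [mul_le_mul_of_nonneg_left hco (mul_nonneg hΔt.le hαA.le),
    mul_le_mul_of_nonneg_left hρ (by positivity : (0:ℝ) ≤ 2 * Δt * αA),
    mul_nonneg hΔt.le (sq_nonneg (D - αA * ng)),
    mul_le_mul_of_nonneg_left hPSD' hαA.le, hdot, hΔt, hαA]
end

section
/- Under the primal error setting with coercivity constant α_A, for each n ∈ {1, …, N} one has (eⁿ)ᵀ M eⁿ + Δt·∑_{m=1}^{n} (eᵐ)ᵀ A_sym eᵐ ≤ (Δt/α_A)·∑_{m=1}^{n} ‖rᵐ‖₋₁². -/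
open Matrix BigOperators Finset

lemma symm_dot {d : ℕ} {B : Matrix (Fin d) (Fin d) ℝ} (hB : Bᵀ = B) (x y : Fin d → ℝ) :
    y ⬝ᵥ B *ᵥ x = x ⬝ᵥ B *ᵥ y := by
  rw [dotProduct_comm, dotProduct_mulVec, ← mulVec_transpose, hB]

lemma psd_nonneg {d : ℕ} {B : Matrix (Fin d) (Fin d) ℝ} (hB : B.PosSemidef) (x : Fin d → ℝ) :
    0 ≤ x ⬝ᵥ B *ᵥ x := by
  simpa using hB.dotProduct_mulVec_nonneg x

lemma psd_transpose_eq {d : ℕ} {B : Matrix (Fin d) (Fin d) ℝ} (hB : B.IsHermitian) : Bᵀ = B := by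
  simpa [Matrix.IsHermitian, conjTranspose_eq_transpose_of_trivial] using hB

/-- Cauchy–Schwarz for a PSD bilinear form. -/
lemma cs_psd {d : ℕ} {B : Matrix (Fin d) (Fin d) ℝ} (hB : B.PosSemidef) (x y : Fin d → ℝ) :
    x ⬝ᵥ B *ᵥ y ≤ Real.sqrt (x ⬝ᵥ B *ᵥ x) * Real.sqrt (y ⬝ᵥ B *ᵥ y) := by
  have hBt : Bᵀ = B := psd_transpose_eq hB.1
  have key : ∀ t : ℝ, 0 ≤ (y ⬝ᵥ B *ᵥ y) * (t * t) + (2 * (x ⬝ᵥ B *ᵥ y)) * t + x ⬝ᵥ B *ᵥ x := by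
    intro t
    have h := psd_nonneg hB (x + t • y)
    have expand : (x + t • y) ⬝ᵥ B *ᵥ (x + t • y)
        = (y ⬝ᵥ B *ᵥ y) * (t * t) + (2 * (x ⬝ᵥ B *ᵥ y)) * t + x ⬝ᵥ B *ᵥ x := by
      have hsy : y ⬝ᵥ B *ᵥ x = x ⬝ᵥ B *ᵥ y := symm_dot hBt x y
      simp only [Matrix.mulVec_add, Matrix.mulVec_smul, dotProduct_add, add_dotProduct,
        dotProduct_smul, smul_dotProduct, smul_eq_mul, hsy]
      ring
    linarith [expand ▸ h]
  have hd := discrim_le_zero key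
  have hsq : (x ⬝ᵥ B *ᵥ y) ^ 2 ≤ (x ⬝ᵥ B *ᵥ x) * (y ⬝ᵥ B *ᵥ y) := by
    simp only [discrim] at hd
    nlinarith [hd]
  calc x ⬝ᵥ B *ᵥ y ≤ |x ⬝ᵥ B *ᵥ y| := le_abs_self _
    _ = Real.sqrt ((x ⬝ᵥ B *ᵥ y) ^ 2) := (Real.sqrt_sq_eq_abs _).symm
    _ ≤ Real.sqrt ((x ⬝ᵥ B *ᵥ x) * (y ⬝ᵥ B *ᵥ y)) := Real.sqrt_le_sqrt hsq
    _ = Real.sqrt (x ⬝ᵥ B *ᵥ x) * Real.sqrt (y ⬝ᵥ B *ᵥ y) :=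
      Real.sqrt_mul (psd_nonneg hB x) _

/-- The duality pairing bound `r ⬝ v ≤ ‖r‖₋₁ ‖v‖_G`. -/
lemma dual_pairing {d : ℕ} {G : Matrix (Fin d) (Fin d) ℝ} (hG : G.PosDef) (r v : Fin d → ℝ) :
    r ⬝ᵥ v ≤ dualNorm G r * normG G v := by
  have hGpsd := hG.posSemidef
  by_cases hv : v = 0
  · simp [hv, normG, Matrix.mulVec_zero]
  · set w : Fin d → ℝ := G⁻¹ *ᵥ r with hw
    have hGw : G *ᵥ w = r := by
      rw [hw, Matrix.mulVec_mulVec, Matrix.mul_nonsing_inv _ hG.det_pos.ne'.isUnit,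
        Matrix.one_mulVec]
    have hbound : ∀ u : Fin d → ℝ, u ≠ 0 → r ⬝ᵥ u / normG G u ≤ normG G w := by
      intro u hu
      have hnu : 0 < normG G u := Real.sqrt_pos.2 (by simpa using hG.dotProduct_mulVec_pos hu)
      rw [div_le_iff₀ hnu]
      have : r ⬝ᵥ u = u ⬝ᵥ G *ᵥ w := by
        rw [← hGw, dotProduct_comm]
      rw [this]
      calc u ⬝ᵥ G *ᵥ w ≤ Real.sqrt (u ⬝ᵥ G *ᵥ u) * Real.sqrt (w ⬝ᵥ G *ᵥ w) :=
            cs_psd hGpsd u w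
        _ = normG G w * normG G u := by rw [mul_comm]; rfl
    have hbdd : BddAbove (Set.range fun v : {v : Fin d → ℝ // v ≠ 0} =>
        (r ⬝ᵥ (v : Fin d → ℝ)) / normG G (v : Fin d → ℝ)) := by
      refine ⟨normG G w, ?_⟩
      rintro x ⟨⟨u, hu⟩, rfl⟩
      exact hbound u hu
    have hle : r ⬝ᵥ v / normG G v ≤ dualNorm G r := le_ciSup hbdd ⟨v, hv⟩
    have hnv : 0 < normG G v := Real.sqrt_pos.2 (by simpa using hG.dotProduct_mulVec_pos hv)
    calc r ⬝ᵥ v = (r ⬝ᵥ v / normG G v) * normG G v := by field_simp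
      _ ≤ dualNorm G r * normG G v := by
          exact mul_le_mul_of_nonneg_right hle hnv.le

theorem stmt3 {d : ℕ} (hd : 1 ≤ d)
    (G M A : Matrix (Fin d) (Fin d) ℝ) (hG : G.PosDef) (hM : M.PosSemidef)
    (Δt : ℝ) (hΔt : 0 < Δt) (N : ℕ) (hN : 1 ≤ N)
    (αA : ℝ) (hαA : 0 < αA)
    (hcoA : ∀ v : Fin d → ℝ, αA * (normG G v)^2 ≤ v ⬝ᵥ (symPart A).mulVec v)
    (e r : ℕ → Fin d → ℝ) (he0 : e 0 = 0)
    (hstep : ∀ k, 1 ≤ k → k ≤ N →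
      (M + Δt • A).mulVec (e k) = M.mulVec (e (k - 1)) - Δt • r k)
    (n : ℕ) (hn1 : 1 ≤ n) (hnN : n ≤ N) :
    e n ⬝ᵥ M.mulVec (e n) +
        Δt * ∑ m ∈ Finset.Icc 1 n, e m ⬝ᵥ (symPart A).mulVec (e m) ≤
      (Δt / αA) * ∑ m ∈ Finset.Icc 1 n, (dualNorm G (r m))^2 := by
  have hMt : Mᵀ = M := psd_transpose_eq hM.1
  have sym_eq : ∀ v : Fin d → ℝ, v ⬝ᵥ (symPart A) *ᵥ v = v ⬝ᵥ A *ᵥ v := by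
    intro v
    have ht : v ⬝ᵥ Aᵀ *ᵥ v = v ⬝ᵥ A *ᵥ v := by
      rw [dotProduct_mulVec, vecMul_transpose, dotProduct_comm]
    simp only [symPart, Matrix.smul_mulVec, Matrix.add_mulVec, dotProduct_smul,
      dotProduct_add, smul_eq_mul, ht]
    ring
  -- per-step energy estimate
  have key : ∀ k, 1 ≤ k → k ≤ N →
      e k ⬝ᵥ M *ᵥ e k - e (k-1) ⬝ᵥ M *ᵥ e (k-1) + Δt * (e k ⬝ᵥ (symPart A) *ᵥ e k)
        ≤ (Δt / αA) * (dualNorm G (r k))^2 := by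
    intro k hk1 hkN
    have h := congrArg (fun z => e k ⬝ᵥ z) (hstep k hk1 hkN)
    simp only [Matrix.add_mulVec, Matrix.smul_mulVec, dotProduct_add, dotProduct_smul,
      dotProduct_sub, smul_eq_mul] at h
    rw [← sym_eq (e k)] at h
    set a := dualNorm G (r k) with ha
    set b := normG G (e k) with hb
    -- (1) Cauchy–Schwarz + AM-GM for M
    have h1 : e k ⬝ᵥ M *ᵥ e (k-1)
        ≤ (e k ⬝ᵥ M *ᵥ e k + e (k-1) ⬝ᵥ M *ᵥ e (k-1)) / 2 := by
      have hcs := cs_psd hM (e k) (e (k-1))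
      have h2ab := two_mul_le_add_sq (Real.sqrt (e k ⬝ᵥ M *ᵥ e k))
        (Real.sqrt (e (k-1) ⬝ᵥ M *ᵥ e (k-1)))
      rw [Real.sq_sqrt (psd_nonneg hM (e k)), Real.sq_sqrt (psd_nonneg hM (e (k-1)))] at h2ab
      nlinarith [hcs, h2ab]
    -- (2) duality bound
    have h2 : -(e k ⬝ᵥ r k) ≤ a * b := by
      have hdp := dual_pairing hG (r k) (-(e k))
      have hneg : normG G (-(e k)) = b := by
        simp [normG, hb, Matrix.mulVec_neg, dotProduct_neg, neg_dotProduct, neg_neg]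
      rw [hneg] at hdp
      calc -(e k ⬝ᵥ r k) = r k ⬝ᵥ (-(e k)) := by
            rw [dotProduct_comm, ← dotProduct_neg]
        _ ≤ a * b := hdp
    -- (3) Young's inequality
    have h3 : a * b ≤ a^2 / (2*αA) + αA/2 * b^2 := by
      have h0 : (0:ℝ) < 2*αA := by linarith
      have heq : (a^2/(2*αA) + αA/2*b^2) - a*b = (a - αA*b)^2 / (2*αA) := by
        field_simp; ring
      have hnn := div_nonneg (sq_nonneg (a - αA*b)) h0.le
      linarith
    -- (4) coercivity
    have h4 : αA * b^2 ≤ e k ⬝ᵥ (symPart A) *ᵥ e k := hcoA (e k)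
    have h2' := mul_le_mul_of_nonneg_left h2 hΔt.le
    have h3' := mul_le_mul_of_nonneg_left h3 hΔt.le
    have h4' := mul_le_mul_of_nonneg_left h4 hΔt.le
    have hdiv : Δt * (a^2 / (2*αA) + αA/2 * b^2)
        = (Δt/αA) * a^2 / 2 + Δt * (αA * b^2) / 2 := by
      field_simp
    rw [hdiv] at h3'
    linarith [h, h1, h2', h3', h4']
  -- induction
  have main : ∀ m : ℕ, m ≤ N →
      e m ⬝ᵥ M *ᵥ e m + Δt * ∑ j ∈ Finset.Icc 1 m, e j ⬝ᵥ (symPart A) *ᵥ e j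
        ≤ (Δt / αA) * ∑ j ∈ Finset.Icc 1 m, (dualNorm G (r j))^2 := by
    intro m
    induction m with
    | zero =>
      intro _
      simp [he0, Matrix.mulVec_zero]
    | succ m ih =>
      intro hle
      have hkey := key (m+1) (Nat.le_add_left 1 m) hle
      simp only [Nat.add_sub_cancel] at hkey
      have ihh := ih (Nat.le_of_succ_le hle)
      rw [Finset.sum_Icc_succ_top (Nat.le_add_left 1 m),
        Finset.sum_Icc_succ_top (Nat.le_add_left 1 m)]
      have hexp1 : Δt * ((∑ j ∈ Finset.Icc 1 m, e j ⬝ᵥ (symPart A) *ᵥ e j)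
          + e (m+1) ⬝ᵥ (symPart A) *ᵥ e (m+1))
          = Δt * (∑ j ∈ Finset.Icc 1 m, e j ⬝ᵥ (symPart A) *ᵥ e j)
            + Δt * (e (m+1) ⬝ᵥ (symPart A) *ᵥ e (m+1)) := by ring
      have hexp2 : (Δt/αA) * ((∑ j ∈ Finset.Icc 1 m, (dualNorm G (r j))^2)
          + (dualNorm G (r (m+1)))^2)
          = (Δt/αA) * (∑ j ∈ Finset.Icc 1 m, (dualNorm G (r j))^2)
            + (Δt/αA) * (dualNorm G (r (m+1)))^2 := by ring
      rw [hexp1, hexp2]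
      linarith [hkey, ihh]
  exact main n hnN
end

section
/- Under the primal error setting with coercivity constant α_A, one has ∑_{n=1}^{N} (eⁿ)ᵀ M eⁿ ≤ (T/α_A)·∑_{n=1}^{N} ‖rⁿ‖₋₁², where T = N·Δt. -/
open Matrix BigOperators Finset

section aux
variable {d : ℕ}

lemma symm_dot_s4 (M : Matrix (Fin d) (Fin d) ℝ) (hMs : Mᵀ = M) (u v : Fin d → ℝ) :
    u ⬝ᵥ M.mulVec v = v ⬝ᵥ M.mulVec u := by
  rw [Matrix.dotProduct_mulVec, ← Matrix.mulVec_transpose, hMs, dotProduct_comm]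

lemma psd_nonneg_s4 (M : Matrix (Fin d) (Fin d) ℝ) (hM : M.PosSemidef) (x : Fin d → ℝ) :
    0 ≤ x ⬝ᵥ M.mulVec x := by
  have := hM.dotProduct_mulVec_nonneg x
  simpa using this

lemma psd_symm (M : Matrix (Fin d) (Fin d) ℝ) (hM : M.PosSemidef) : Mᵀ = M := by
  have := hM.1
  rwa [Matrix.IsHermitian, Matrix.conjTranspose_eq_transpose_of_trivial] at this

lemma psd_cauchy (M : Matrix (Fin d) (Fin d) ℝ) (hM : M.PosSemidef) (x y : Fin d → ℝ) :
    (x ⬝ᵥ M.mulVec y)^2 ≤ (x ⬝ᵥ M.mulVec x) * (y ⬝ᵥ M.mulVec y) := by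
  have hsym := psd_symm M hM
  have key : ∀ t : ℝ, 0 ≤ (y ⬝ᵥ M.mulVec y) * (t*t) + (2 * (x ⬝ᵥ M.mulVec y)) * t
      + (x ⬝ᵥ M.mulVec x) := by
    intro t
    have h0 := psd_nonneg_s4 M hM (x + t • y)
    have hxy : y ⬝ᵥ M.mulVec x = x ⬝ᵥ M.mulVec y := symm_dot_s4 M hsym y x
    simp only [Matrix.mulVec_add, Matrix.mulVec_smul, dotProduct_add,
      add_dotProduct, smul_dotProduct, dotProduct_smul,
      smul_eq_mul] at h0
    rw [hxy] at h0
    nlinarith [h0]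
  have hd := discrim_le_zero key
  rw [discrim] at hd
  nlinarith [hd]

end aux

theorem stmt4 {d : ℕ} (hd : 1 ≤ d)
    (G M A : Matrix (Fin d) (Fin d) ℝ) (hG : G.PosDef) (hM : M.PosSemidef)
    (Δt : ℝ) (hΔt : 0 < Δt) (N : ℕ) (hN : 1 ≤ N)
    (αA : ℝ) (hαA : 0 < αA)
    (hcoA : ∀ v : Fin d → ℝ, αA * (normG G v)^2 ≤ v ⬝ᵥ (symPart A).mulVec v)
    (e r : ℕ → Fin d → ℝ) (he0 : e 0 = 0)
    (hstep : ∀ k, 1 ≤ k → k ≤ N →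
      (M + Δt • A).mulVec (e k) = M.mulVec (e (k - 1)) - Δt • r k) :
    ∑ n ∈ Finset.Icc 1 N, e n ⬝ᵥ M.mulVec (e n) ≤
      ((N * Δt) / αA) * ∑ n ∈ Finset.Icc 1 N, (dualNorm G (r n))^2 := by
  have hGs : Gᵀ = G := psd_symm G hG.posSemidef
  -- pairing bound
  have hGdet : IsUnit G.det := isUnit_iff_ne_zero.mpr (ne_of_gt hG.det_pos)
  have hGinv : ∀ w : Fin d → ℝ, G.mulVec (G⁻¹.mulVec w) = w := by
    intro w
    rw [Matrix.mulVec_mulVec, Matrix.mul_nonsing_inv G hGdet, Matrix.one_mulVec]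
  have hCS : ∀ (w v : Fin d → ℝ), w ⬝ᵥ v ≤ Real.sqrt (w ⬝ᵥ G⁻¹.mulVec w) * normG G v := by
    intro w v
    have key : ∀ z : Fin d → ℝ, (G⁻¹.mulVec w) ⬝ᵥ G.mulVec z = w ⬝ᵥ z := by
      intro z
      rw [Matrix.dotProduct_mulVec, ← Matrix.mulVec_transpose, hGs, hGinv]
    have h2 : w ⬝ᵥ G⁻¹.mulVec w = (G⁻¹.mulVec w) ⬝ᵥ G.mulVec (G⁻¹.mulVec w) := (key _).symm
    rw [← key v, h2, normG]
    have hcs := psd_cauchy G hG.posSemidef (G⁻¹.mulVec w) v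
    have h3 : (G⁻¹.mulVec w) ⬝ᵥ G.mulVec v ≤
        Real.sqrt (((G⁻¹.mulVec w) ⬝ᵥ G.mulVec (G⁻¹.mulVec w)) * (v ⬝ᵥ G.mulVec v)) := by
      calc (G⁻¹.mulVec w) ⬝ᵥ G.mulVec v ≤ |(G⁻¹.mulVec w) ⬝ᵥ G.mulVec v| := le_abs_self _
        _ = Real.sqrt (((G⁻¹.mulVec w) ⬝ᵥ G.mulVec v)^2) := (Real.sqrt_sq_eq_abs _).symm
        _ ≤ _ := Real.sqrt_le_sqrt hcs
    rwa [Real.sqrt_mul (psd_nonneg_s4 G hG.posSemidef _)] at h3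
  have hne : Nonempty {v : Fin d → ℝ // v ≠ 0} := by
    refine ⟨⟨fun _ => 1, ?_⟩⟩
    intro h
    have := congrFun h ⟨0, hd⟩
    simp at this
  have hnormpos : ∀ v : Fin d → ℝ, v ≠ 0 → 0 < normG G v := by
    intro v hv
    exact Real.sqrt_pos.mpr (by simpa using hG.dotProduct_mulVec_pos hv)
  have hbdd : ∀ w : Fin d → ℝ, BddAbove (Set.range fun v : {v : Fin d → ℝ // v ≠ 0} =>
      (w ⬝ᵥ (v : Fin d → ℝ)) / normG G (v : Fin d → ℝ)) := by
    intro w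
    refine ⟨Real.sqrt (w ⬝ᵥ G⁻¹.mulVec w), ?_⟩
    rintro x ⟨⟨v, hv⟩, rfl⟩
    exact (div_le_iff₀ (hnormpos v hv)).mpr (hCS w v)
  have hpair : ∀ (w v : Fin d → ℝ), w ⬝ᵥ v ≤ dualNorm G w * normG G v := by
    intro w v
    by_cases hv : v = 0
    · simp [hv, normG, dotProduct_zero, Matrix.mulVec_zero]
    · have h1 : (w ⬝ᵥ v) / normG G v ≤ dualNorm G w :=
        le_ciSup (hbdd w) (⟨v, hv⟩ : {v : Fin d → ℝ // v ≠ 0})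
      calc w ⬝ᵥ v = (w ⬝ᵥ v) / normG G v * normG G v := by
            rw [div_mul_cancel₀ _ (hnormpos v hv).ne']
        _ ≤ dualNorm G w * normG G v :=
            mul_le_mul_of_nonneg_right h1 (hnormpos v hv).le
  -- coercivity rewritten for A
  have hAcoer : ∀ v : Fin d → ℝ, αA * (normG G v)^2 ≤ v ⬝ᵥ A.mulVec v := by
    intro v
    have h := hcoA v
    have heq : v ⬝ᵥ (symPart A).mulVec v = v ⬝ᵥ A.mulVec v := by
      have hAT : v ⬝ᵥ Aᵀ.mulVec v = v ⬝ᵥ A.mulVec v := by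
        rw [Matrix.mulVec_transpose, dotProduct_comm, ← Matrix.dotProduct_mulVec]
      rw [symPart, Matrix.smul_mulVec, dotProduct_smul, Matrix.add_mulVec,
        dotProduct_add, hAT, smul_eq_mul]
      ring
    rwa [heq] at h
  -- one-step estimate
  have hstep' : ∀ n, 1 ≤ n → n ≤ N →
      e n ⬝ᵥ M.mulVec (e n) ≤ e (n-1) ⬝ᵥ M.mulVec (e (n-1))
        + (Δt / (2*αA)) * (dualNorm G (r n))^2 := by
    intro n hn1 hnN
    have h := congrArg (fun w => e n ⬝ᵥ w) (hstep n hn1 hnN)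
    simp only [Matrix.add_mulVec, Matrix.smul_mulVec, dotProduct_add,
      dotProduct_smul, dotProduct_sub, smul_eq_mul] at h
    set En := e n ⬝ᵥ M.mulVec (e n) with hEn
    set Ep := e (n-1) ⬝ᵥ M.mulVec (e (n-1)) with hEp
    set Dn := dualNorm G (r n) with hDn
    set x := normG G (e n) with hx
    -- h : En + Δt * (e n ⬝ᵥ A.mulVec (e n)) = e n ⬝ᵥ M.mulVec (e (n-1)) - Δt * (e n ⬝ᵥ r n)
    have f1 : αA * x^2 ≤ e n ⬝ᵥ A.mulVec (e n) := hAcoer (e n)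
    have f2 : 2 * (e n ⬝ᵥ M.mulVec (e (n-1))) ≤ En + Ep := by
      have h0 := psd_nonneg_s4 M hM (e n - e (n-1))
      have hsym : e (n-1) ⬝ᵥ M.mulVec (e n) = e n ⬝ᵥ M.mulVec (e (n-1)) :=
        symm_dot_s4 M (psd_symm M hM) _ _
      simp only [Matrix.mulVec_sub, dotProduct_sub, sub_dotProduct] at h0
      rw [hEn, hEp]; linarith
    have f3 : -(e n ⬝ᵥ r n) ≤ Dn * x := by
      have h1 : r n ⬝ᵥ (-(e n)) ≤ Dn * normG G (-(e n)) := hpair (r n) (-(e n))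
      have h2 : normG G (-(e n)) = x := by
        rw [hx, normG, normG, Matrix.mulVec_neg, dotProduct_neg, neg_dotProduct,
          neg_neg]
      rw [h2] at h1
      calc -(e n ⬝ᵥ r n) = r n ⬝ᵥ (-(e n)) := by
            rw [dotProduct_neg, dotProduct_comm]
        _ ≤ Dn * x := h1
    have f4 : Dn * x ≤ αA * x^2 + Dn^2 / (4*αA) := by
      have h4 : 4*αA*(Dn*x) ≤ 4*αA*(αA*x^2 + Dn^2/(4*αA)) := by
        have heq4 : 4*αA*(αA*x^2 + Dn^2/(4*αA)) = 4*αA*(αA*x^2) + Dn^2 := by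
          field_simp
        rw [heq4]; nlinarith [sq_nonneg (2*αA*x - Dn)]
      exact le_of_mul_le_mul_left h4 (by positivity)
    -- combine
    have hmul1 : Δt * (αA * x^2) ≤ Δt * (e n ⬝ᵥ A.mulVec (e n)) :=
      mul_le_mul_of_nonneg_left f1 hΔt.le
    have hmul2 : Δt * (-(e n ⬝ᵥ r n)) ≤ Δt * (Dn * x) :=
      mul_le_mul_of_nonneg_left f3 hΔt.le
    have hmul3 : Δt * (Dn * x) ≤ Δt * (αA * x^2 + Dn^2 / (4*αA)) :=
      mul_le_mul_of_nonneg_left f4 hΔt.le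
    have hq : Δt / (2*αA) * Dn^2 = 2 * (Δt * (Dn^2 / (4*αA))) := by
      field_simp; ring
    nlinarith [h, f2, hmul1, hmul2, hmul3]
  -- cumulative bound
  have hDsq_nonneg : ∀ n, 0 ≤ (dualNorm G (r n))^2 := fun n => sq_nonneg _
  set S := ∑ n ∈ Finset.Icc 1 N, (dualNorm G (r n))^2 with hS
  have hSnn : 0 ≤ S := Finset.sum_nonneg fun n _ => hDsq_nonneg n
  have hcum : ∀ n, n ≤ N → e n ⬝ᵥ M.mulVec (e n)
      ≤ (Δt / (2*αA)) * ∑ k ∈ Finset.Icc 1 n, (dualNorm G (r k))^2 := by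
    intro n
    induction n with
    | zero => intro _; simp [he0]
    | succ m ih =>
      intro hmN
      have hm : m ≤ N := Nat.le_of_succ_le hmN
      have h1 := hstep' (m+1) (Nat.succ_le_succ (Nat.zero_le m)) hmN
      simp only [Nat.add_sub_cancel] at h1
      have h2 := ih hm
      rw [Finset.sum_Icc_succ_top (Nat.succ_le_succ (Nat.zero_le m))]
      have : (Δt / (2*αA)) * (∑ k ∈ Finset.Icc 1 m, (dualNorm G (r k))^2
          + (dualNorm G (r (m+1)))^2)
          = (Δt / (2*αA)) * ∑ k ∈ Finset.Icc 1 m, (dualNorm G (r k))^2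
            + (Δt / (2*αA)) * (dualNorm G (r (m+1)))^2 := by ring
      rw [this]
      linarith
  have hcum' : ∀ n ∈ Finset.Icc 1 N, e n ⬝ᵥ M.mulVec (e n) ≤ (Δt / (2*αA)) * S := by
    intro n hn
    rw [Finset.mem_Icc] at hn
    refine (hcum n hn.2).trans ?_
    have hsub : Finset.Icc 1 n ⊆ Finset.Icc 1 N := Finset.Icc_subset_Icc_right hn.2
    have := Finset.sum_le_sum_of_subset_of_nonneg hsub (fun k _ _ => hDsq_nonneg k)
    have hc : 0 ≤ Δt / (2*αA) := by positivity
    exact mul_le_mul_of_nonneg_left this hc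
  calc ∑ n ∈ Finset.Icc 1 N, e n ⬝ᵥ M.mulVec (e n)
      ≤ ∑ _n ∈ Finset.Icc 1 N, (Δt / (2*αA)) * S := Finset.sum_le_sum hcum'
    _ = N * ((Δt / (2*αA)) * S) := by
        rw [Finset.sum_const, Nat.card_Icc]
        simp [nsmul_eq_mul]
    _ ≤ ((N * Δt) / αA) * S := by
        have hN0 : (0:ℝ) ≤ N := Nat.cast_nonneg N
        have h5 : Δt / (2*αA) ≤ Δt / αA := by
          rw [div_le_div_iff₀ (by positivity) hαA]; nlinarith
        have h6 : (N:ℝ) * (Δt / (2*αA)) ≤ (N * Δt) / αA := by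
          calc (N:ℝ) * (Δt / (2*αA)) ≤ (N:ℝ) * (Δt / αA) :=
                mul_le_mul_of_nonneg_left h5 hN0
            _ = (N * Δt) / αA := (mul_div_assoc _ _ _).symm
        rw [← mul_assoc]
        exact mul_le_mul_of_nonneg_right h6 hSnn
end

section
/- Under the dual error setting, for each m ∈ {0, …, N−1} one has (εᵐ)ᵀ (M + Δt·Aᵀ) εᵐ ≤ √((εᵐ⁺¹)ᵀ M εᵐ⁺¹) · √((εᵐ)ᵀ M εᵐ) + Δt·‖ϱᵐ‖₋₁·‖εᵐ‖_{G*}. -/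
open Matrix BigOperators Finset

section SqrtPort
open scoped MatrixOrder

noncomputable def Matrix.PosSemidef.sqrt {d : ℕ} {M : Matrix (Fin d) (Fin d) ℝ}
    (_hM : M.PosSemidef) : Matrix (Fin d) (Fin d) ℝ :=
  CFC.sqrt M

lemma Matrix.PosSemidef.posSemidef_sqrt {d : ℕ} {M : Matrix (Fin d) (Fin d) ℝ}
    (hM : M.PosSemidef) : hM.sqrt.PosSemidef :=
  (CFC.sqrt_nonneg M).posSemidef

lemma Matrix.PosSemidef.sqrt_mul_self {d : ℕ} {M : Matrix (Fin d) (Fin d) ℝ}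
    (hM : M.PosSemidef) : hM.sqrt * hM.sqrt = M :=
  CFC.sqrt_mul_sqrt_self M hM.nonneg

end SqrtPort

/-- Euclidean Cauchy–Schwarz in dot-product form. -/
lemma dot_CS {d : ℕ} (a b : Fin d → ℝ) :
    a ⬝ᵥ b ≤ Real.sqrt (a ⬝ᵥ a) * Real.sqrt (b ⬝ᵥ b) := by
  have := Real.sum_mul_le_sqrt_mul_sqrt Finset.univ a b
  simpa [dotProduct, pow_two] using this

/-- Cauchy–Schwarz for positive semidefinite bilinear forms. -/
lemma psd_CS {d : ℕ} {M : Matrix (Fin d) (Fin d) ℝ} (hM : M.PosSemidef) (x y : Fin d → ℝ) :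
    x ⬝ᵥ M.mulVec y ≤ Real.sqrt (x ⬝ᵥ M.mulVec x) * Real.sqrt (y ⬝ᵥ M.mulVec y) := by
  have hsym : hM.sqrt.IsHermitian := hM.posSemidef_sqrt.1
  have hT : hM.sqrtᵀ = hM.sqrt := by
    have := hsym.eq
    simpa [Matrix.conjTranspose_eq_transpose_of_trivial] using this
  have key : ∀ u v : Fin d → ℝ, u ⬝ᵥ M.mulVec v = (hM.sqrt.mulVec u) ⬝ᵥ (hM.sqrt.mulVec v) := by
    intro u v
    conv_lhs => rw [← hM.sqrt_mul_self]
    rw [← Matrix.mulVec_mulVec, Matrix.dotProduct_mulVec, ← Matrix.mulVec_transpose, hT]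
  rw [key, key, key]
  exact dot_CS _ _

/-- The fundamental dual-norm inequality `r ⬝ v ≤ ‖r‖₋₁ ‖v‖_{G}`. -/
lemma dual_mul {d : ℕ} {G : Matrix (Fin d) (Fin d) ℝ} (hG : G.PosDef)
    (r w : Fin d → ℝ) : r ⬝ᵥ w ≤ dualNorm G r * normG G w := by
  set S := hG.posSemidef.sqrt with hS
  have hT : Sᵀ = S := by
    have := hG.posSemidef.posSemidef_sqrt.1.eq
    simpa [Matrix.conjTranspose_eq_transpose_of_trivial] using this
  have hSS : S * S = G := hG.posSemidef.sqrt_mul_self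
  have hdet : IsUnit S.det := by
    have h2 : S.det * S.det = G.det := by rw [← Matrix.det_mul, hSS]
    have : G.det ≠ 0 := ne_of_gt hG.det_pos
    exact isUnit_iff_ne_zero.2 (fun h => this (by rw [← h2, h, zero_mul]))
  have hinv : S⁻¹ * S = 1 := Matrix.nonsing_inv_mul S hdet
  have hTi : S⁻¹ᵀ = S⁻¹ := by rw [Matrix.transpose_nonsing_inv, hT]
  set C := Real.sqrt ((S⁻¹.mulVec r) ⬝ᵥ (S⁻¹.mulVec r)) with hC
  have key : ∀ v : Fin d → ℝ, r ⬝ᵥ v ≤ C * normG G v := by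
    intro v
    have h1 : r ⬝ᵥ v = (S⁻¹.mulVec r) ⬝ᵥ (S.mulVec v) := by
      conv_lhs => rw [show v = (S⁻¹ * S).mulVec v by rw [hinv, Matrix.one_mulVec]]
      rw [← Matrix.mulVec_mulVec, Matrix.dotProduct_mulVec, ← Matrix.mulVec_transpose, hTi]
    have h2 : (S.mulVec v) ⬝ᵥ (S.mulVec v) = v ⬝ᵥ G.mulVec v := by
      rw [Matrix.dotProduct_mulVec, ← Matrix.mulVec_transpose, hT, Matrix.mulVec_mulVec, hSS]
      exact dotProduct_comm _ _
    rw [h1, normG, ← h2]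
    exact dot_CS _ _
  have hbdd : BddAbove (Set.range fun v : {v : Fin d → ℝ // v ≠ 0} =>
      (r ⬝ᵥ (v : Fin d → ℝ)) / normG G (v : Fin d → ℝ)) := by
    refine ⟨C, ?_⟩
    rintro x ⟨⟨v, hv⟩, rfl⟩
    have hpos : 0 < normG G v := Real.sqrt_pos.2 (by simpa using hG.dotProduct_mulVec_pos hv)
    exact div_le_of_le_mul₀ (le_of_lt hpos) (by positivity) (key v) |>.trans_eq rfl
  by_cases hw : w = 0
  · simp [hw, normG, Matrix.mulVec_zero]
  · have hpos : 0 < normG G w := Real.sqrt_pos.2 (by simpa using hG.dotProduct_mulVec_pos hw)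
    have hle : (r ⬝ᵥ w) / normG G w ≤ dualNorm G r :=
      le_ciSup hbdd ⟨w, hw⟩
    calc r ⬝ᵥ w = (r ⬝ᵥ w) / normG G w * normG G w := by field_simp
    _ ≤ dualNorm G r * normG G w :=
        mul_le_mul_of_nonneg_right hle (le_of_lt hpos)

theorem stmt7 {d : ℕ} (hd : 1 ≤ d)
    (G M A : Matrix (Fin d) (Fin d) ℝ) (hG : G.PosDef) (hM : M.PosSemidef)
    (Δt : ℝ) (hΔt : 0 < Δt) (N : ℕ) (hN : 1 ≤ N)
    (ε ϱ : ℕ → Fin d → ℝ) (hεN : ε N = 0)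
    (hstep : ∀ k, k < N →
      (M + Δt • Aᵀ).mulVec (ε k) = M.mulVec (ε (k + 1)) - Δt • ϱ k)
    (m : ℕ) (hm : m < N) :
    ε m ⬝ᵥ (M + Δt • Aᵀ).mulVec (ε m) ≤
      Real.sqrt (ε (m + 1) ⬝ᵥ M.mulVec (ε (m + 1))) * Real.sqrt (ε m ⬝ᵥ M.mulVec (ε m)) +
        Δt * dualNorm G (ϱ m) * normG G (ε m) := by
  have hrw : ε m ⬝ᵥ (M + Δt • Aᵀ).mulVec (ε m)
      = ε m ⬝ᵥ M.mulVec (ε (m + 1)) + Δt * (ϱ m ⬝ᵥ (-(ε m))) := by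
    rw [hstep m hm]
    simp [dotProduct_sub, dotProduct_smul, dotProduct_comm (ε m) (ϱ m),
      smul_eq_mul]
    ring
  have h1 : ε m ⬝ᵥ M.mulVec (ε (m + 1)) ≤
      Real.sqrt (ε (m + 1) ⬝ᵥ M.mulVec (ε (m + 1))) * Real.sqrt (ε m ⬝ᵥ M.mulVec (ε m)) :=
    (psd_CS hM (ε m) (ε (m + 1))).trans_eq (mul_comm _ _)
  have h2 : ϱ m ⬝ᵥ (-(ε m)) ≤ dualNorm G (ϱ m) * normG G (ε m) := by
    have := dual_mul hG (ϱ m) (-(ε m))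
    have hneg : normG G (-(ε m)) = normG G (ε m) := by
      simp [normG, Matrix.mulVec_neg]
    rwa [hneg] at this
  have h2' : Δt * (ϱ m ⬝ᵥ (-(ε m))) ≤ Δt * (dualNorm G (ϱ m) * normG G (ε m)) :=
    mul_le_mul_of_nonneg_left h2 (le_of_lt hΔt)
  rw [hrw]
  have := add_le_add h1 h2'
  linarith [this]
end

section
/- Under the dual error setting with coercivity constant α_A, for each m ∈ {0, …, N−1} one has (εᵐ)ᵀ M εᵐ − (εᵐ⁺¹)ᵀ M εᵐ⁺¹ + Δt·(εᵐ)ᵀ Aᵀ εᵐ ≤ (Δt/α_A)·‖ϱᵐ‖₋₁². -/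
open Matrix BigOperators Finset

lemma quad_nonneg {d : ℕ} {G : Matrix (Fin d) (Fin d) ℝ} (hG : G.PosSemidef) (v : Fin d → ℝ) :
    0 ≤ v ⬝ᵥ G.mulVec v := by simpa using hG.dotProduct_mulVec_nonneg v

lemma normG_sq {d : ℕ} {G : Matrix (Fin d) (Fin d) ℝ} (hG : G.PosSemidef) (v : Fin d → ℝ) :
    normG G v ^ 2 = v ⬝ᵥ G.mulVec v :=
  Real.sq_sqrt (quad_nonneg hG v)

-- symmetry of dot product for hermitian real matrix
lemma dot_symm {d : ℕ} {G : Matrix (Fin d) (Fin d) ℝ} (hG : G.IsHermitian)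
    (u v : Fin d → ℝ) : u ⬝ᵥ G.mulVec v = v ⬝ᵥ G.mulVec u := by
  have h : Gᵀ = G := by
    have := hG
    simpa [Matrix.IsHermitian, conjTranspose_eq_transpose_of_trivial] using this
  rw [dotProduct_mulVec, dotProduct_comm, ← mulVec_transpose, h]

lemma cs_posdef {d : ℕ} {G : Matrix (Fin d) (Fin d) ℝ} (hG : G.PosDef)
    (u : Fin d → ℝ) {v : Fin d → ℝ} (hv : v ≠ 0) :
    (u ⬝ᵥ G.mulVec v)^2 ≤ (u ⬝ᵥ G.mulVec u) * (v ⬝ᵥ G.mulVec v) := by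
  set a := u ⬝ᵥ G.mulVec u with ha
  set b := u ⬝ᵥ G.mulVec v with hb
  set c := v ⬝ᵥ G.mulVec v with hc0
  have hc : 0 < c := by simpa using hG.dotProduct_mulVec_pos hv
  have key : ∀ t : ℝ, 0 ≤ a + 2*t*b + t^2*c := by
    intro t
    have h0 := quad_nonneg hG.posSemidef (u + t • v)
    have hsym := dot_symm hG.1 v u
    simp only [mulVec_add, mulVec_smul, dotProduct_add, add_dotProduct, smul_dotProduct,
      dotProduct_smul, smul_eq_mul] at h0
    rw [hsym] at h0
    nlinarith [h0]
  have hk := key (-(b/c))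
  have : a + 2*(-(b/c))*b + (-(b/c))^2*c = a - b^2/c := by field_simp; ring
  rw [this] at hk
  have : b^2/c ≤ a := by linarith
  calc b^2 = (b^2/c)*c := by field_simp
  _ ≤ a * c := by apply mul_le_mul_of_nonneg_right this hc.le

lemma dual_bdd {d : ℕ} {G : Matrix (Fin d) (Fin d) ℝ} (hG : G.PosDef) (r : Fin d → ℝ) :
    BddAbove (Set.range fun v : {v : Fin d → ℝ // v ≠ 0} =>
      (r ⬝ᵥ (v : Fin d → ℝ)) / normG G (v : Fin d → ℝ)) := by
  have hdet : IsUnit G.det := isUnit_iff_ne_zero.mpr hG.det_pos.ne'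
  set u := G⁻¹.mulVec r with hu
  have hGu : G.mulVec u = r := by
    rw [hu, Matrix.mulVec_mulVec, Matrix.mul_nonsing_inv G hdet, Matrix.one_mulVec]
  refine ⟨normG G u, ?_⟩
  rintro x ⟨⟨v, hv⟩, rfl⟩
  simp only
  have hrv : r ⬝ᵥ v = u ⬝ᵥ G.mulVec v := by
    rw [← hGu, dotProduct_comm, dot_symm hG.1]
  have hcs := cs_posdef hG u hv
  have hnv : 0 < normG G v := normG_pos hG hv
  rw [div_le_iff₀ hnv, hrv]
  have h1 : (u ⬝ᵥ G.mulVec v) ≤ |u ⬝ᵥ G.mulVec v| := le_abs_self _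
  have h2 : |u ⬝ᵥ G.mulVec v| ≤ normG G u * normG G v := by
    have : |u ⬝ᵥ G.mulVec v| = Real.sqrt ((u ⬝ᵥ G.mulVec v)^2) := (Real.sqrt_sq_eq_abs _).symm
    rw [this, normG, normG, ← Real.sqrt_mul (quad_nonneg hG.posSemidef u)]
    exact Real.sqrt_le_sqrt hcs
  linarith

lemma neg_dot_le {d : ℕ} {G : Matrix (Fin d) (Fin d) ℝ} (hG : G.PosDef)
    (r e : Fin d → ℝ) : -(e ⬝ᵥ r) ≤ dualNorm G r * normG G e := by
  by_cases he : e = 0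
  · simp [he, normG]
  · have hv : (-e : Fin d → ℝ) ≠ 0 := neg_ne_zero.mpr he
    have hne : normG G (-e) = normG G e := by
      simp [normG, Matrix.mulVec_neg, dotProduct_neg, neg_dotProduct]
    have hle : (r ⬝ᵥ (-e)) / normG G (-e) ≤ dualNorm G r :=
      le_ciSup (dual_bdd hG r) (⟨-e, hv⟩ : {v : Fin d → ℝ // v ≠ 0})
    rw [hne, div_le_iff₀ (normG_pos hG he)] at hle
    have : r ⬝ᵥ (-e) = -(e ⬝ᵥ r) := by rw [dotProduct_neg, dotProduct_comm]
    linarith [hle, this ▸ hle]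

theorem stmt8 {d : ℕ} (hd : 1 ≤ d)
    (G M A : Matrix (Fin d) (Fin d) ℝ) (hG : G.PosDef) (hM : M.PosSemidef)
    (Δt : ℝ) (hΔt : 0 < Δt) (N : ℕ) (hN : 1 ≤ N)
    (αA : ℝ) (hαA : 0 < αA)
    (hcoA : ∀ v : Fin d → ℝ, αA * (normG G v)^2 ≤ v ⬝ᵥ (symPart A).mulVec v)
    (ε ϱ : ℕ → Fin d → ℝ) (hεN : ε N = 0)
    (hstep : ∀ k, k < N →
      (M + Δt • Aᵀ).mulVec (ε k) = M.mulVec (ε (k + 1)) - Δt • ϱ k)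
    (m : ℕ) (hm : m < N) :
    ε m ⬝ᵥ M.mulVec (ε m) - ε (m + 1) ⬝ᵥ M.mulVec (ε (m + 1)) +
        Δt * (ε m ⬝ᵥ Aᵀ.mulVec (ε m)) ≤
      (Δt / αA) * (dualNorm G (ϱ m))^2 := by
  set e := ε m with he
  set f := ε (m+1) with hf
  set r := ϱ m with hr
  set a := normG G e with ha
  set b := dualNorm G r with hb
  -- E1
  have E1 : e ⬝ᵥ M.mulVec e + Δt * (e ⬝ᵥ Aᵀ.mulVec e)
      = e ⬝ᵥ M.mulVec f - Δt * (e ⬝ᵥ r) := by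
    have h := congrArg (fun w => e ⬝ᵥ w) (hstep m hm)
    simpa [add_mulVec, smul_mulVec, dotProduct_add, dotProduct_sub,
      dotProduct_smul, smul_eq_mul] using h
  -- E2
  have E2 : 0 ≤ e ⬝ᵥ M.mulVec e - 2 * (e ⬝ᵥ M.mulVec f) + f ⬝ᵥ M.mulVec f := by
    have h0 := quad_nonneg hM (e - f)
    have hsym := dot_symm hM.1 f e
    simp only [Matrix.mulVec_sub, dotProduct_sub, sub_dotProduct] at h0
    linarith
  -- E3
  have E3 : αA * a^2 ≤ e ⬝ᵥ Aᵀ.mulVec e := by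
    have h := hcoA e
    have heq : e ⬝ᵥ (symPart A).mulVec e = e ⬝ᵥ Aᵀ.mulVec e := by
      have h2 : e ⬝ᵥ A.mulVec e = e ⬝ᵥ Aᵀ.mulVec e := by
        rw [Matrix.mulVec_transpose, Matrix.dotProduct_mulVec, dotProduct_comm]
      simp only [symPart, Matrix.smul_mulVec, Matrix.add_mulVec, dotProduct_smul,
        dotProduct_add, smul_eq_mul]
      linarith
    rw [heq] at h
    exact h
  -- E4
  have E4 : -(e ⬝ᵥ r) ≤ b * a := neg_dot_le hG r e
  have E3' := mul_le_mul_of_nonneg_left E3 hΔt.le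
  have E4' := mul_le_mul_of_nonneg_left E4 hΔt.le
  have hc : (0:ℝ) ≤ Δt / αA := div_nonneg hΔt.le hαA.le
  have hΔtc : Δt = (Δt / αA) * αA := by field_simp
  have hkey : 0 ≤ (Δt / αA) * (b - αA * a)^2 := mul_nonneg hc (sq_nonneg _)
  nlinarith [E1, E2, E3', E4', hkey, hΔtc]
end

section
/- (Energy a posteriori error estimate for the dual problem.) Under the dual error setting with coercivity constants α_A ≥ α_{A,LB} > 0 and α_G ≥ α_{G,LB} > 0, one has the parameter-independent space-time energy bound ∑_{m=0}^{N−1} [ (εᵐ)ᵀ M εᵐ + Δt·(εᵐ)ᵀ S εᵐ ] = ∑_{m=0}^{N−1} ‖εᵐ‖²_{G*} ≤ ((T + Δt)/(α_{G,LB}·α_{A,LB}))·∑_{m=0}^{N−1} ‖ϱᵐ‖₋₁², where T = N·Δt. -/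
open Matrix BigOperators Finset

namespace StmtAux

variable {d : ℕ}

lemma symm_dot {B : Matrix (Fin d) (Fin d) ℝ} (hB : Bᵀ = B) (u v : Fin d → ℝ) :
    u ⬝ᵥ B.mulVec v = v ⬝ᵥ B.mulVec u := by
  rw [Matrix.dotProduct_mulVec, ← Matrix.mulVec_transpose, hB, dotProduct_comm]

lemma transpose_eq {B : Matrix (Fin d) (Fin d) ℝ} (hB : B.IsHermitian) : Bᵀ = B := by
  rw [← Matrix.conjTranspose_eq_transpose_of_trivial]; exact hB

lemma normG_sq {G : Matrix (Fin d) (Fin d) ℝ} (hG : G.PosSemidef) (v : Fin d → ℝ) :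
    (normG G v) ^ 2 = v ⬝ᵥ G.mulVec v := by
  have := hG.dotProduct_mulVec_nonneg v
  simp only [star_trivial] at this
  exact Real.sq_sqrt this

lemma normG_pos {G : Matrix (Fin d) (Fin d) ℝ} (hG : G.PosDef) {v : Fin d → ℝ}
    (hv : v ≠ 0) : 0 < normG G v := by
  have := hG.dotProduct_mulVec_pos hv
  simp only [star_trivial] at this
  exact Real.sqrt_pos.2 this

lemma cs {G : Matrix (Fin d) (Fin d) ℝ} (hG : G.PosDef) (u v : Fin d → ℝ) :
    (u ⬝ᵥ G.mulVec v) ^ 2 ≤ (u ⬝ᵥ G.mulVec u) * (v ⬝ᵥ G.mulVec v) := by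
  by_cases hv : v = 0
  · simp [hv]
  have hGT : Gᵀ = G := transpose_eq hG.1
  have hc : 0 < v ⬝ᵥ G.mulVec v := by
    have := hG.dotProduct_mulVec_pos hv; simpa using this
  have hq := hG.posSemidef.dotProduct_mulVec_nonneg ((v ⬝ᵥ G.mulVec v) • u - (u ⬝ᵥ G.mulVec v) • v)
  simp only [star_trivial, Matrix.mulVec_sub, Matrix.mulVec_smul, sub_dotProduct,
    smul_dotProduct, dotProduct_sub, dotProduct_smul,
    smul_eq_mul] at hq
  rw [symm_dot hGT v u] at hq
  nlinarith [hq, hc]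

lemma pair_le {G : Matrix (Fin d) (Fin d) ℝ} (hG : G.PosDef) (r w : Fin d → ℝ) :
    r ⬝ᵥ w ≤ dualNorm G r * normG G w := by
  have hGT : Gᵀ = G := transpose_eq hG.1
  set u : Fin d → ℝ := G⁻¹ *ᵥ r with hu
  have hGu : G *ᵥ u = r := by
    rw [hu, Matrix.mulVec_mulVec, Matrix.mul_nonsing_inv G hG.det_pos.ne'.isUnit,
      Matrix.one_mulVec]
  have hru : ∀ x : Fin d → ℝ, r ⬝ᵥ x = u ⬝ᵥ G.mulVec x := by
    intro x
    rw [symm_dot hGT u x, hGu, dotProduct_comm]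
  have hbound : ∀ x : Fin d → ℝ, r ⬝ᵥ x ≤ normG G u * normG G x := by
    intro x
    rw [hru x]
    have h1 := cs hG u x
    have h2 : u ⬝ᵥ G.mulVec x ≤ |u ⬝ᵥ G.mulVec x| := le_abs_self _
    have h3 : |u ⬝ᵥ G.mulVec x| = Real.sqrt ((u ⬝ᵥ G.mulVec x) ^ 2) := by
      rw [Real.sqrt_sq_eq_abs]
    have h4 : Real.sqrt ((u ⬝ᵥ G.mulVec x) ^ 2) ≤
        Real.sqrt ((u ⬝ᵥ G.mulVec u) * (x ⬝ᵥ G.mulVec x)) := Real.sqrt_le_sqrt h1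
    have h5 : Real.sqrt ((u ⬝ᵥ G.mulVec u) * (x ⬝ᵥ G.mulVec x)) = normG G u * normG G x := by
      rw [normG, normG, ← Real.sqrt_mul]
      have := hG.posSemidef.dotProduct_mulVec_nonneg u; simpa using this
    linarith [h2, h3 ▸ h2, h4, h5]
  by_cases hw : w = 0
  · simp [hw, normG]
  have hbdd : BddAbove (Set.range fun v : {v : Fin d → ℝ // v ≠ 0} =>
      (r ⬝ᵥ (v : Fin d → ℝ)) / normG G (v : Fin d → ℝ)) := by
    refine ⟨normG G u, ?_⟩
    rintro x ⟨⟨v, hv⟩, rfl⟩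
    have hpos := normG_pos hG hv
    rw [div_le_iff₀ hpos]
    exact hbound v
  have hle : (r ⬝ᵥ w) / normG G w ≤ dualNorm G r :=
    le_ciSup hbdd ⟨w, hw⟩
  have hpos := normG_pos hG hw
  calc r ⬝ᵥ w = (r ⬝ᵥ w) / normG G w * normG G w := by field_simp
    _ ≤ dualNorm G r * normG G w := by
        exact mul_le_mul_of_nonneg_right hle hpos.le

lemma normG_neg {G : Matrix (Fin d) (Fin d) ℝ} (v : Fin d → ℝ) :
    normG G (-v) = normG G v := by
  simp [normG, Matrix.mulVec_neg]

lemma abs_pair {G : Matrix (Fin d) (Fin d) ℝ} (hG : G.PosDef) (r w : Fin d → ℝ) :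
    |r ⬝ᵥ w| ≤ dualNorm G r * normG G w := by
  rw [abs_le]
  constructor
  · have := pair_le hG r (-w)
    rw [normG_neg] at this
    simp only [dotProduct_neg] at this
    linarith
  · exact pair_le hG r w

lemma dualNorm_nonneg (hd : 1 ≤ d) {G : Matrix (Fin d) (Fin d) ℝ} (hG : G.PosDef)
    (r : Fin d → ℝ) : 0 ≤ dualNorm G r := by
  have hv0 : (Pi.single (⟨0, hd⟩ : Fin d) (1:ℝ) : Fin d → ℝ) ≠ 0 := by
    intro h
    have := congrFun h ⟨0, hd⟩
    simp at this
  have h1 := abs_pair hG r (Pi.single (⟨0, hd⟩ : Fin d) (1:ℝ))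
  have h2 := normG_pos hG hv0
  nlinarith [abs_nonneg (r ⬝ᵥ (Pi.single (⟨0, hd⟩ : Fin d) (1:ℝ) : Fin d → ℝ))]

end StmtAux
set_option maxHeartbeats 1600000 in
theorem stmt12 {d : ℕ} (hd : 1 ≤ d)
    (M A S G : Matrix (Fin d) (Fin d) ℝ) (hM : M.PosSemidef) (hS : S.IsSymm)
    (Δt : ℝ) (hΔt : 0 < Δt)
    (hGdef : G = M + Δt • S) (hG : G.PosDef)
    (N : ℕ) (hN : 1 ≤ N)
    (αA αALB : ℝ) (hαALB : 0 < αALB) (hαALBle : αALB ≤ αA)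
    (hcoA : ∀ v : Fin d → ℝ, αA * (normG G v)^2 ≤ v ⬝ᵥ (symPart A).mulVec v)
    (αG αGLB : ℝ) (hαGLB : 0 < αGLB) (hαGLBle : αGLB ≤ αG)
    (hcoG : ∀ v : Fin d → ℝ,
      αG * (normG G v)^2 ≤ v ⬝ᵥ (M + Δt • symPart A).mulVec v)
    (ε ϱ : ℕ → Fin d → ℝ) (hεN : ε N = 0)
    (hstep : ∀ k, k < N →
      (M + Δt • Aᵀ).mulVec (ε k) = M.mulVec (ε (k + 1)) - Δt • ϱ k) :
    (∑ m ∈ Finset.range N,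
        (ε m ⬝ᵥ M.mulVec (ε m) + Δt * (ε m ⬝ᵥ S.mulVec (ε m))) =
      ∑ m ∈ Finset.range N, (normG G (ε m))^2) ∧
    ∑ m ∈ Finset.range N, (normG G (ε m))^2 ≤
      ((N * Δt + Δt) / (αGLB * αALB)) * ∑ m ∈ Finset.range N, (dualNorm G (ϱ m))^2 := by
  have hαA : 0 < αA := lt_of_lt_of_le hαALB hαALBle
  have hαG : 0 < αG := lt_of_lt_of_le hαGLB hαGLBle
  have hMT : Mᵀ = M := StmtAux.transpose_eq hM.1
  -- abbreviations
  set a : ℕ → ℝ := fun m => ε m ⬝ᵥ M.mulVec (ε m) with ha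
  set nk : ℕ → ℝ := fun m => normG G (ε m) with hnk
  set dk : ℕ → ℝ := fun m => dualNorm G (ϱ m) with hdk
  set R : ℝ := ∑ m ∈ Finset.range N, dk m ^ 2 with hR
  set E : ℝ := ∑ m ∈ Finset.range N, nk m ^ 2 with hE
  have hQ : ∀ m, nk m ^ 2 = ε m ⬝ᵥ G.mulVec (ε m) := fun m => StmtAux.normG_sq hG.posSemidef (ε m)
  -- part 1
  have part1 : (∑ m ∈ Finset.range N,
      (ε m ⬝ᵥ M.mulVec (ε m) + Δt * (ε m ⬝ᵥ S.mulVec (ε m)))) = E := by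
    refine Finset.sum_congr rfl fun m _ => ?_
    rw [hQ m, hGdef]
    simp [Matrix.add_mulVec, Matrix.smul_mulVec, dotProduct_add,
      dotProduct_smul, smul_eq_mul]
  -- basic nonnegativity
  have ha_nn : ∀ m, 0 ≤ a m := fun m => by
    have := hM.dotProduct_mulVec_nonneg (ε m); simpa using this
  have hnk_nn : ∀ m, 0 ≤ nk m ^ 2 := fun m => sq_nonneg _
  have hdk_nn : ∀ m, 0 ≤ dk m := fun m => StmtAux.dualNorm_nonneg hd hG (ϱ m)
  have hE_nn : 0 ≤ E := Finset.sum_nonneg fun m _ => sq_nonneg _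
  have hR_nn : 0 ≤ R := Finset.sum_nonneg fun m _ => sq_nonneg _
  have haN : a N = 0 := by simp [ha, hεN]
  -- symmetric part identity
  have hsymA : ∀ m, ε m ⬝ᵥ Aᵀ.mulVec (ε m) = ε m ⬝ᵥ (symPart A).mulVec (ε m) := by
    intro m
    have h1 : ε m ⬝ᵥ Aᵀ.mulVec (ε m) = ε m ⬝ᵥ A.mulVec (ε m) := by
      rw [Matrix.dotProduct_mulVec, Matrix.vecMul_transpose, dotProduct_comm]
    rw [symPart]
    simp only [Matrix.smul_mulVec, Matrix.add_mulVec, dotProduct_smul,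
      dotProduct_add, smul_eq_mul]
    linarith
  -- dotted step equation
  have hdot : ∀ k, k < N → a k + Δt * (ε k ⬝ᵥ (symPart A).mulVec (ε k)) =
      ε k ⬝ᵥ M.mulVec (ε (k+1)) - Δt * (ϱ k ⬝ᵥ ε k) := by
    intro k hk
    have h := congrArg (fun w => ε k ⬝ᵥ w) (hstep k hk)
    simp only [Matrix.add_mulVec, Matrix.smul_mulVec, dotProduct_add,
      dotProduct_smul, smul_eq_mul, dotProduct_sub] at h
    rw [hsymA k, dotProduct_comm (ε k) (ϱ k)] at h
    simpa [ha] using h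
  -- Young inequality for M
  have hMY : ∀ u v : Fin d → ℝ, u ⬝ᵥ M.mulVec v ≤ (u ⬝ᵥ M.mulVec u)/2 + (v ⬝ᵥ M.mulVec v)/2 := by
    intro u v
    have h0 := hM.dotProduct_mulVec_nonneg (u - v)
    simp only [star_trivial, Matrix.mulVec_sub, sub_dotProduct,
      dotProduct_sub] at h0
    rw [StmtAux.symm_dot hMT v u] at h0
    linarith
  have hpair : ∀ k, |ϱ k ⬝ᵥ ε k| ≤ dk k * nk k := fun k => StmtAux.abs_pair hG (ϱ k) (ε k)
  -- core per-step inequality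
  have hIneq : ∀ k, k < N →
      αA * a k - αA * a (k+1) + Δt * αA^2 * nk k ^ 2 ≤ Δt * dk k ^ 2 := by
    intro k hk
    have h1 := hdot k hk
    have h2 := hcoA (ε k)
    have h3 := hMY (ε k) (ε (k+1))
    have h4 : -(ϱ k ⬝ᵥ ε k) ≤ dk k * nk k := le_trans (neg_le_abs _) (hpair k)
    have h5 : 2 * αA * (dk k * nk k) ≤ dk k ^ 2 + αA^2 * nk k ^ 2 := by
      nlinarith [sq_nonneg (dk k - αA * nk k)]
    have e2 : (2 * αA * Δt) * (αA * nk k ^ 2) ≤ (2 * αA * Δt) * (ε k ⬝ᵥ (symPart A).mulVec (ε k)) := by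
      have : (0:ℝ) ≤ 2 * αA * Δt := by positivity
      exact mul_le_mul_of_nonneg_left h2 this
    have e3 : (2 * αA) * (ε k ⬝ᵥ M.mulVec (ε (k+1))) ≤
        (2 * αA) * ((a k)/2 + (a (k+1))/2) := by
      have : (0:ℝ) ≤ 2 * αA := by positivity
      exact mul_le_mul_of_nonneg_left h3 this
    have e4 : (2 * αA * Δt) * (-(ϱ k ⬝ᵥ ε k)) ≤ (2 * αA * Δt) * (dk k * nk k) := by
      have : (0:ℝ) ≤ 2 * αA * Δt := by positivity
      exact mul_le_mul_of_nonneg_left h4 this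
    have e5 : Δt * (2 * αA * (dk k * nk k)) ≤ Δt * (dk k ^ 2 + αA^2 * nk k ^ 2) :=
      mul_le_mul_of_nonneg_left h5 hΔt.le
    have e1 : (2 * αA) * (a k + Δt * (ε k ⬝ᵥ (symPart A).mulVec (ε k))) =
        (2 * αA) * (ε k ⬝ᵥ M.mulVec (ε (k+1)) - Δt * (ϱ k ⬝ᵥ ε k)) := by rw [h1]
    nlinarith [e1, e2, e3, e4, e5]
  -- summed inequality gives E bound
  have hEbound : αA^2 * E ≤ R := by
    have hsum := Finset.sum_le_sum (fun k hk => hIneq k (Finset.mem_range.1 hk))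
    rw [Finset.sum_add_distrib] at hsum
    have htel : ∑ k ∈ Finset.range N, (αA * a k - αA * a (k+1)) = αA * a 0 - αA * a N :=
      Finset.sum_range_sub' (fun k => αA * a k) N
    rw [htel, haN] at hsum
    have hsE : ∑ k ∈ Finset.range N, Δt * αA^2 * nk k ^ 2 = Δt * αA^2 * E := by
      rw [hE, Finset.mul_sum]
    have hsR : ∑ k ∈ Finset.range N, Δt * dk k ^ 2 = Δt * R := by
      rw [hR, Finset.mul_sum]
    rw [hsE, hsR] at hsum
    have h0 := ha_nn 0
    have : Δt * (αA^2 * E) ≤ Δt * R := by nlinarith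
    exact le_of_mul_le_mul_left this hΔt
  -- claim A: uniform bound on a m
  have hA : ∀ j, j ≤ N → αA * a (N - j) ≤ Δt * ∑ k ∈ Finset.Ico (N - j) N, dk k ^ 2 := by
    intro j
    induction j with
    | zero => intro _; simp [haN]
    | succ j ih =>
      intro hj
      have hjN : j ≤ N := Nat.le_of_succ_le hj
      have hlt : N - (j+1) < N := by omega
      have hplus : N - (j+1) + 1 = N - j := by omega
      have hstep1 := hIneq (N - (j+1)) hlt
      rw [hplus] at hstep1
      have hsplit : ∑ k ∈ Finset.Ico (N - (j+1)) N, dk k ^ 2 =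
          dk (N - (j+1)) ^ 2 + ∑ k ∈ Finset.Ico (N - j) N, dk k ^ 2 := by
        rw [Finset.sum_eq_sum_Ico_succ_bot hlt, hplus]
      have ihj := ih hjN
      have hnn : 0 ≤ Δt * αA^2 * nk (N - (j+1)) ^ 2 := by positivity
      rw [hsplit]
      nlinarith [hstep1, ihj, hnn]
  have hAm : ∀ m, m ≤ N → αA * a m ≤ Δt * R := by
    intro m hm
    have h := hA (N - m) (Nat.sub_le N m)
    rw [Nat.sub_sub_self hm] at h
    refine h.trans (mul_le_mul_of_nonneg_left ?_ hΔt.le)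
    refine Finset.sum_le_sum_of_subset_of_nonneg ?_ (fun k _ _ => sq_nonneg _)
    rw [Finset.range_eq_Ico]
    exact Finset.Ico_subset_Ico (Nat.zero_le m) le_rfl
  -- core2 per-step
  have hcore2 : ∀ k, k < N →
      αA * αG * nk k ^ 2 ≤ Δt * R + Δt * αA * (dk k * nk k) := by
    intro k hk
    have h1 := hdot k hk
    have h2 := hcoG (ε k)
    have h2' : αG * nk k ^ 2 ≤ a k + Δt * (ε k ⬝ᵥ (symPart A).mulVec (ε k)) := by
      have : ε k ⬝ᵥ (M + Δt • symPart A).mulVec (ε k) =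
          a k + Δt * (ε k ⬝ᵥ (symPart A).mulVec (ε k)) := by
        simp [Matrix.add_mulVec, Matrix.smul_mulVec, dotProduct_add,
          dotProduct_smul, smul_eq_mul, ha]
      rw [this] at h2
      exact h2
    have h3 := hMY (ε k) (ε (k+1))
    have h4 : -(ϱ k ⬝ᵥ ε k) ≤ dk k * nk k := le_trans (neg_le_abs _) (hpair k)
    have hak := hAm k (Nat.le_of_lt hk)
    have hak1 := hAm (k+1) hk
    have e4 : Δt * αA * (-(ϱ k ⬝ᵥ ε k)) ≤ Δt * αA * (dk k * nk k) := by
      have : (0:ℝ) ≤ Δt * αA := by positivity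
      exact mul_le_mul_of_nonneg_left h4 this
    have e3 : αA * (ε k ⬝ᵥ M.mulVec (ε (k+1))) ≤ αA * ((a k)/2 + (a (k+1))/2) :=
      mul_le_mul_of_nonneg_left h3 hαA.le
    have e2 : αA * (αG * nk k ^ 2) ≤ αA * (a k + Δt * (ε k ⬝ᵥ (symPart A).mulVec (ε k))) :=
      mul_le_mul_of_nonneg_left h2' hαA.le
    have e1 : αA * (a k + Δt * (ε k ⬝ᵥ (symPart A).mulVec (ε k))) =
        αA * (ε k ⬝ᵥ M.mulVec (ε (k+1)) - Δt * (ϱ k ⬝ᵥ ε k)) := by rw [h1]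
    nlinarith [e1, e2, e3, e4, hak, hak1]
  -- sum core2
  have hsum2 : αA * αG * E ≤ (N : ℝ) * (Δt * R) + Δt * αA * (∑ k ∈ Finset.range N, dk k * nk k) := by
    have hsum := Finset.sum_le_sum (fun k hk => hcore2 k (Finset.mem_range.1 hk))
    rw [Finset.sum_add_distrib, Finset.sum_const, Finset.card_range, nsmul_eq_mul] at hsum
    have hf1 : ∑ k ∈ Finset.range N, Δt * αA * (dk k * nk k) =
        Δt * αA * ∑ k ∈ Finset.range N, dk k * nk k := by rw [Finset.mul_sum]
    have hf2 : ∑ k ∈ Finset.range N, αA * αG * nk k ^ 2 = αA * αG * E := by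
      rw [hE, Finset.mul_sum]
    rw [hf1, hf2] at hsum
    exact hsum
  -- bound P
  have hP : αA * (∑ k ∈ Finset.range N, dk k * nk k) ≤ R := by
    have hper : ∀ k ∈ Finset.range N, 2 * αA * (dk k * nk k) ≤ dk k ^ 2 + αA^2 * nk k ^ 2 := by
      intro k _
      nlinarith [sq_nonneg (dk k - αA * nk k)]
    have hsum := Finset.sum_le_sum hper
    rw [Finset.sum_add_distrib, ← Finset.mul_sum, ← Finset.mul_sum, ← hR, ← hE] at hsum
    nlinarith [hEbound]
  -- conclude
  refine ⟨part1, ?_⟩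
  have hfinal : αA * αG * E ≤ ((N : ℝ) * Δt + Δt) * R := by
    have : Δt * αA * (∑ k ∈ Finset.range N, dk k * nk k) ≤ Δt * R := by
      have := mul_le_mul_of_nonneg_left hP hΔt.le
      nlinarith [this]
    nlinarith [hsum2, this]
  have hprod : αGLB * αALB ≤ αG * αA :=
    mul_le_mul hαGLBle hαALBle hαALB.le hαG.le
  have hprodpos : 0 < αGLB * αALB := mul_pos hαGLB hαALB
  rw [div_mul_eq_mul_div, le_div_iff₀ hprodpos]
  nlinarith [hfinal, mul_le_mul_of_nonneg_right hprod hE_nn, hE_nn]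
end

section
/- (Primal-dual output error representation.) In the goal-oriented setting, for every n ∈ {1, …, N} the output error admits the exact representation lᵀ eⁿ = Δt·∑_{k=0}^{n−1} (r^{k+1})ᵀ ε^{N−n+k} + Δt·∑_{k=0}^{n−1} (r^{k+1})ᵀ Ψ̃^{N−n+k}, where eⁿ is the primal reduction error, ε the dual reduction error, and Ψ̃ the reduced dual solution. -/
open Matrix BigOperators Finset

theorem stmt13 {d : ℕ} (hd : 1 ≤ d)
    (M A : Matrix (Fin d) (Fin d) ℝ) (hM : M.PosSemidef)
    (Δt : ℝ) (hΔt : 0 < Δt) (N : ℕ) (hN : 1 ≤ N)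
    (e r : ℕ → Fin d → ℝ) (he0 : e 0 = 0)
    (hprimal : ∀ k, 1 ≤ k → k ≤ N →
      (M + Δt • A).mulVec (e k) = M.mulVec (e (k - 1)) - Δt • r k)
    (l : Fin d → ℝ)
    (Ψ Ψt : ℕ → Fin d → ℝ)
    (hΨN : M.mulVec (Ψ N) = -l)
    (hΨ : ∀ k, k < N → (M + Δt • Aᵀ).mulVec (Ψ k) = M.mulVec (Ψ (k + 1)))
    (hΨtN : Ψt N = Ψ N)
    (ε ϱ : ℕ → Fin d → ℝ)
    (hε : ∀ k, ε k = Ψ k - Ψt k)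
    (hϱ : ∀ k, k < N →
      ϱ k = (1 / Δt) • ((M + Δt • Aᵀ).mulVec (Ψt k) - M.mulVec (Ψt (k + 1))))
    (n : ℕ) (hn1 : 1 ≤ n) (hnN : n ≤ N) :
    l ⬝ᵥ e n =
      Δt * ∑ k ∈ Finset.range n, r (k + 1) ⬝ᵥ ε (N - n + k) +
        Δt * ∑ k ∈ Finset.range n, r (k + 1) ⬝ᵥ Ψt (N - n + k) := by

  have hMsymm : Mᵀ = M := by
    have := hM.1.eq
    rwa [Matrix.conjTranspose_eq_transpose_of_trivial] at this
  -- auxiliary: transpose move of dot product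
  have hdot : ∀ (B : Matrix (Fin d) (Fin d) ℝ) (x y : Fin d → ℝ),
      B.mulVec x ⬝ᵥ y = x ⬝ᵥ Bᵀ.mulVec y := by
    intro B x y
    rw [Matrix.dotProduct_mulVec, Matrix.vecMul_transpose]
  have hstep : ∀ k, k < n →
      M.mulVec (Ψ (N - n + (k + 1))) ⬝ᵥ e (k + 1)
        = M.mulVec (Ψ (N - n + k)) ⬝ᵥ e k - Δt * (r (k + 1) ⬝ᵥ Ψ (N - n + k)) := by
    intro k hk
    have h1 : N - n + k < N := by omega
    have h2 : N - n + (k + 1) = (N - n + k) + 1 := by omega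
    rw [h2, ← hΨ _ h1, hdot]
    have hT : (M + Δt • Aᵀ)ᵀ = M + Δt • A := by
      rw [Matrix.transpose_add, Matrix.transpose_smul, Matrix.transpose_transpose, hMsymm]
    rw [hT]
    have hp := hprimal (k + 1) (by omega) (by omega)
    simp only [Nat.add_sub_cancel] at hp
    rw [hp, dotProduct_sub, dotProduct_smul, smul_eq_mul,
      Matrix.dotProduct_mulVec, ← Matrix.mulVec_transpose, hMsymm,
      dotProduct_comm (Ψ (N - n + k)) (r (k + 1))]
  have htel : ∀ m, m ≤ n →
      M.mulVec (Ψ (N - n + m)) ⬝ᵥ e m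
        = - (Δt * ∑ k ∈ Finset.range m, r (k + 1) ⬝ᵥ Ψ (N - n + k)) := by
    intro m
    induction m with
    | zero => intro _; simp [he0]
    | succ m ih =>
      intro hm
      rw [hstep m (by omega), ih (by omega), Finset.sum_range_succ]
      ring
  have hfin := htel n le_rfl
  have hNn : N - n + n = N := by omega
  rw [hNn, hΨN] at hfin
  have hl : l ⬝ᵥ e n = Δt * ∑ k ∈ Finset.range n, r (k + 1) ⬝ᵥ Ψ (N - n + k) := by
    have : (-l) ⬝ᵥ e n = - (l ⬝ᵥ e n) := by simp
    rw [this] at hfin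
    linarith
  rw [hl, ← mul_add, ← Finset.sum_add_distrib]
  congr 1
  apply Finset.sum_congr rfl
  intro k _
  rw [← dotProduct_add, hε]
  congr 1
  abel
end
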